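/- Every almost bounded function from a metric space (X,d) to every metric space (Y,ρ) is continuous if and only if (X,d) is topologically discrete. -/

import Mathlib

open Metric Filter

/-- A sequence is cofinally Cauchy if for every ε>0 there is an infinite index set
on which all pairwise distances are < ε. -/
def CofinallyCauchy {X : Type*} [MetricSpace X] (x : ℕ → X) : Prop :=
  ∀ ε > 0, ∃ N : Set ℕ, N.Infinite ∧ ∀ n ∈ N, ∀ j ∈ N, dist (x n) (x j) < ε

/-- A function is almost bounded if for every ε>0 there is δ>0 such that the image of
every set of diameter < δ is contained in a finite union of open ε-balls. -/
def AlmostBounded {X Y : Type*} [MetricSpace X] [MetricSpace Y] (f : X → Y) : Prop :=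
  ∀ ε > 0, ∃ δ > 0, ∀ A : Set X, EMetric.diam A < ENNReal.ofReal δ →
    ∃ B : Finset Y, f '' A ⊆ ⋃ b ∈ B, Metric.ball b ε

/-- A metric space is cofinally complete if every cofinally Cauchy sequence clusters. -/
def CofinallyComplete (X : Type*) [MetricSpace X] : Prop :=
  ∀ x : ℕ → X, CofinallyCauchy x → ∃ p : X, MapClusterPt p atTop x

/-- The local total boundedness functional. -/
noncomputable def tFun {X : Type*} [MetricSpace X] (x : X) : ℝ :=
  sSup {ε : ℝ | 0 < ε ∧ TotallyBounded (Metric.ball x ε)}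

/-- Every almost bounded function from X to every metric space is continuous iff X is
topologically discrete. -/
theorem almostBounded_continuous_iff_discrete {X : Type*} [MetricSpace X] :
    (∀ (Y : Type) (_ : MetricSpace Y) (f : X → Y), AlmostBounded f → Continuous f) ↔
      DiscreteTopology X := by
  constructor
  · intro h
    rw [discreteTopology_iff_isOpen_singleton]
    intro p
    by_contra hp
    classical
    set f : X → ℝ := fun x => if x = p then 1 else 0 with hf
    have hab : AlmostBounded f := by
      intro ε hε
      refine ⟨1, one_pos, fun A _ => ⟨({0, 1} : Finset ℝ), ?_⟩⟩
      rintro y ⟨x, -, rfl⟩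
      by_cases hx : x = p
      · refine Set.mem_biUnion (show (1:ℝ) ∈ ({0,1} : Finset ℝ) by simp) ?_
        simp [hf, hx, mem_ball, hε]
      · refine Set.mem_biUnion (show (0:ℝ) ∈ ({0,1} : Finset ℝ) by simp) ?_
        simp [hf, hx, mem_ball, hε]
    have hc : Continuous f := h ℝ _ f hab
    have : IsOpen (f ⁻¹' Metric.ball 1 (1/2)) := hc.isOpen_preimage _ isOpen_ball
    have heq : f ⁻¹' Metric.ball 1 (1/2) = {p} := by
      ext x
      by_cases hx : x = p <;>
        simp [hf, hx, mem_ball, Real.dist_eq] <;> norm_num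
    rw [heq] at this
    exact hp this
  · intro h Y _ f _
    exact continuous_of_discreteTopology
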